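/- Let p > 1 and let t : [0, ε₀) → (0, ∞) be differentiable with t(0) = 1 and suppose lim_{ε→0⁺} t'(ε)/ε^{p−1} = τ ∈ ℝ. Then for 1 < p < 2, t(ε)^p = 1 + τ ε^p + o(ε^p) as ε → 0⁺, and consequently for two such functions t_h, t_k with limits τ_h, τ_k, one has t_h(ε)^p t_k(ε)^p − 1 = (τ_h + τ_k) ε^p + o(ε^p). -/

import Mathlib

open Topology Filter Asymptotics Set

open Topology Filter Asymptotics Set

private lemma slope_key (p : ℝ) (hp0 : p ≠ 0) :
    Tendsto (fun x : ℝ => if x = 1 then p else (x ^ p - 1) / (x - 1)) (𝓝 1) (𝓝 p) := by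
  have hD : HasDerivAt (fun x : ℝ => x ^ p) (p * (1:ℝ) ^ (p - 1)) 1 :=
    Real.hasDerivAt_rpow_const (Or.inl one_ne_zero)
  have hD' : HasDerivAt (fun x : ℝ => x ^ p) p 1 := by simpa using hD
  have hslope := hasDerivAt_iff_tendsto_slope.mp hD'
  rw [← nhdsNE_sup_pure 1]
  refine tendsto_sup.mpr ⟨?_, ?_⟩
  · refine hslope.congr' ?_
    filter_upwards [self_mem_nhdsWithin] with x hx
    have hx1 : x ≠ 1 := hx
    rw [slope_def_field]
    simp [hx1, Real.one_rpow]
  · have : (fun x : ℝ => if x = 1 then p else (x ^ p - 1) / (x - 1)) 1 = p := by simp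
    simpa [this] using tendsto_pure_nhds (fun x : ℝ => if x = 1 then p else (x ^ p - 1) / (x - 1)) 1

private lemma key_tendsto (p : ℝ) (hp1 : 1 < p) (ε₀ : ℝ) (hε₀ : 0 < ε₀)
    (t t' : ℝ → ℝ) (τ : ℝ)
    (ht0 : t 0 = 1)
    (htd : ∀ ε ∈ Ioo (0:ℝ) ε₀, HasDerivAt t (t' ε) ε)
    (htc : ContinuousWithinAt t (Ici (0:ℝ)) 0)
    (hτ : Tendsto (fun ε => t' ε / ε ^ (p - 1)) (𝓝[>] (0:ℝ)) (𝓝 τ)) :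
    Tendsto (fun ε => (t ε ^ p - 1) / ε ^ p) (𝓝[>] (0:ℝ)) (𝓝 τ) := by
  have hp0 : (0:ℝ) < p := by linarith
  have hmono : 𝓝[>] (0:ℝ) ≤ 𝓝[Ici (0:ℝ)] 0 := nhdsWithin_mono _ Ioi_subset_Ici_self
  have tt : Tendsto t (𝓝[>] (0:ℝ)) (𝓝 1) := by
    have := htc.tendsto
    rw [ht0] at this
    exact this.mono_left hmono
  -- L'Hôpital: (t ε - 1)/ε^p → τ/p
  have hf : ∀ x ∈ Ioo (0:ℝ) ε₀, HasDerivAt (fun ε => t ε - 1) (t' x) x :=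
    fun x hx => (htd x hx).sub_const 1
  have hg : ∀ x ∈ Ioo (0:ℝ) ε₀, HasDerivAt (fun ε : ℝ => ε ^ p) (p * x ^ (p - 1)) x :=
    fun x hx => Real.hasDerivAt_rpow_const (Or.inl (ne_of_gt hx.1))
  have hg' : ∀ x ∈ Ioo (0:ℝ) ε₀, p * x ^ (p - 1) ≠ 0 := fun x hx =>
    (mul_pos hp0 (Real.rpow_pos_of_pos hx.1 _)).ne'
  have hfa : Tendsto (fun ε => t ε - 1) (𝓝[>] (0:ℝ)) (𝓝 0) := by
    simpa using tt.sub_const 1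
  have hga : Tendsto (fun ε : ℝ => ε ^ p) (𝓝[>] (0:ℝ)) (𝓝 0) := by
    have : ContinuousAt (fun ε : ℝ => ε ^ p) 0 :=
      Real.continuousAt_rpow_const 0 p (Or.inr hp0.le)
    have := this.continuousWithinAt.tendsto.mono_left hmono
    simpa [Real.zero_rpow hp0.ne'] using this
  have hdiv : Tendsto (fun x => t' x / (p * x ^ (p - 1))) (𝓝[>] (0:ℝ)) (𝓝 (τ / p)) := by
    refine (hτ.div_const p).congr fun x => ?_
    rw [div_div, mul_comm]
  have hLH : Tendsto (fun ε => (t ε - 1) / ε ^ p) (𝓝[>] (0:ℝ)) (𝓝 (τ / p)) :=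
    HasDerivAt.lhopital_zero_right_on_Ioo hε₀ hf hg hg' hfa hga hdiv
  -- combine with (x^p - 1)/(x - 1) → p
  set F : ℝ → ℝ := fun x => if x = 1 then p else (x ^ p - 1) / (x - 1) with hF
  have hFt : Tendsto (fun ε => F (t ε)) (𝓝[>] (0:ℝ)) (𝓝 p) :=
    (slope_key p hp0.ne').comp tt
  have hprod := hFt.mul hLH
  have : p * (τ / p) = τ := mul_div_cancel₀ τ hp0.ne'
  rw [this] at hprod
  refine hprod.congr fun ε => ?_
  rcases eq_or_ne (t ε) 1 with h | h
  · simp [hF, h, Real.one_rpow]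
  · have hne : t ε - 1 ≠ 0 := sub_ne_zero.mpr h
    simp only [hF, h, ↓reduceIte]
    rw [div_mul_div_comm, mul_comm (t ε ^ p - 1), mul_div_mul_left _ _ hne]

/-- Asymptotic expansion (3.8): if `t` is differentiable on `[0, ε₀)` with `t(0) = 1` and
`t'(ε)/ε^{p−1} → τ` as `ε → 0⁺`, then for `1 < p < 2` one has
`t(ε)^p = 1 + τε^p + o(ε^p)`; for two such functions,
`t_h(ε)^p t_k(ε)^p − 1 = (τ_h + τ_k)ε^p + o(ε^p)`. -/
theorem stmt15 (p : ℝ) (hp1 : 1 < p) (hp2 : p < 2) (ε₀ : ℝ) (hε₀ : 0 < ε₀)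
    (th tk th' tk' : ℝ → ℝ) (τh τk : ℝ)
    (hthpos : ∀ ε ∈ Ico (0:ℝ) ε₀, 0 < th ε)
    (htkpos : ∀ ε ∈ Ico (0:ℝ) ε₀, 0 < tk ε)
    (hth0 : th 0 = 1) (htk0 : tk 0 = 1)
    (hthd : ∀ ε ∈ Ioo (0:ℝ) ε₀, HasDerivAt th (th' ε) ε)
    (htkd : ∀ ε ∈ Ioo (0:ℝ) ε₀, HasDerivAt tk (tk' ε) ε)
    (hthc : ContinuousWithinAt th (Ici (0:ℝ)) 0)
    (htkc : ContinuousWithinAt tk (Ici (0:ℝ)) 0)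
    (hτh : Tendsto (fun ε => th' ε / ε ^ (p - 1)) (𝓝[>] (0:ℝ)) (𝓝 τh))
    (hτk : Tendsto (fun ε => tk' ε / ε ^ (p - 1)) (𝓝[>] (0:ℝ)) (𝓝 τk)) :
    ((fun ε => th ε ^ p - (1 + τh * ε ^ p)) =o[𝓝[>] (0:ℝ)] fun ε => ε ^ p) ∧
    ((fun ε => th ε ^ p * tk ε ^ p - 1 - (τh + τk) * ε ^ p)
        =o[𝓝[>] (0:ℝ)] fun ε => ε ^ p) := by
  have hp0 : (0:ℝ) < p := by linarith
  have hne : ∀ᶠ ε in 𝓝[>] (0:ℝ), (ε : ℝ) ^ p ≠ 0 := by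
    filter_upwards [self_mem_nhdsWithin] with ε hε
    exact (Real.rpow_pos_of_pos hε p).ne'
  have hvac : ∀ f : ℝ → ℝ, ∀ᶠ ε in 𝓝[>] (0:ℝ), (ε:ℝ) ^ p = 0 → f ε = 0 := by
    intro f
    filter_upwards [hne] with ε hε h
    exact absurd h hε
  have Th := key_tendsto p hp1 ε₀ hε₀ th th' τh hth0 hthd hthc hτh
  have Tk := key_tendsto p hp1 ε₀ hε₀ tk tk' τk htk0 htkd htkc hτk
  have hmono : 𝓝[>] (0:ℝ) ≤ 𝓝[Ici (0:ℝ)] 0 := nhdsWithin_mono _ Ioi_subset_Ici_self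
  have ttk : Tendsto tk (𝓝[>] (0:ℝ)) (𝓝 1) := by
    have := htkc.tendsto
    rw [htk0] at this
    exact this.mono_left hmono
  have ttkp : Tendsto (fun ε => tk ε ^ p) (𝓝[>] (0:ℝ)) (𝓝 1) := by
    have hc : ContinuousAt (fun x : ℝ => x ^ p) 1 :=
      Real.continuousAt_rpow_const 1 p (Or.inl one_ne_zero)
    have := hc.tendsto.comp ttk
    simpa [Real.one_rpow, Function.comp_def] using this
  constructor
  · rw [isLittleO_iff_tendsto' (hvac _)]
    have := Th.sub_const τh
    rw [sub_self] at this
    refine this.congr' ?_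
    filter_upwards [hne] with ε hε
    field_simp
    ring
  · rw [isLittleO_iff_tendsto' (hvac _)]
    have hmul : Tendsto
        (fun ε => tk ε ^ p * ((th ε ^ p - 1) / ε ^ p) + (tk ε ^ p - 1) / ε ^ p)
        (𝓝[>] (0:ℝ)) (𝓝 (1 * τh + τk)) := (ttkp.mul Th).add Tk
    rw [one_mul] at hmul
    have := hmul.sub_const (τh + τk)
    rw [sub_self] at this
    refine this.congr' ?_
    filter_upwards [hne] with ε hε
    field_simp
    ring
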